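/- arXiv:1006.5947 — 3 statements merged into one kernel-verified Lean document; each statement's English description precedes it below -/
import Mathlib

section
/- Let G = H × H with diagonal subgroup D = {(h,h) : h ∈ H}. Then the maximal subgroups of G containing D are in bijection with the maximal normal subgroups of H. -/
namespace DiagAux

variable {H : Type*} [Group H]

/-- The subgroup of `H × H` attached to a normal subgroup `N` of `H`. -/
def kn (N : Subgroup H) (hN : N.Normal) : Subgroup (H × H) where
  carrier := {p | p.1 * p.2⁻¹ ∈ N}
  one_mem' := by simpa using one_mem N
  mul_mem' := by
    intro p q hp hq
    have h : p.1 * q.1 * (p.2 * q.2)⁻¹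
        = (p.1 * (q.1 * q.2⁻¹) * p.1⁻¹) * (p.1 * p.2⁻¹) := by group
    show (p * q).1 * ((p * q).2)⁻¹ ∈ N
    simp only [Prod.fst_mul, Prod.snd_mul]
    rw [h]
    exact mul_mem (hN.conj_mem _ hq _) hp
  inv_mem' := by
    intro p hp
    show p⁻¹.1 * (p⁻¹.2)⁻¹ ∈ N
    have h : p⁻¹.1 * (p⁻¹.2)⁻¹ = p.1⁻¹ * (p.1 * p.2⁻¹)⁻¹ * (p.1⁻¹)⁻¹ := by
      simp only [Prod.fst_inv, Prod.snd_inv]; group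
    rw [h]
    exact hN.conj_mem _ (inv_mem hp) _

lemma mem_kn {N : Subgroup H} {hN : N.Normal} {p : H × H} :
    p ∈ kn N hN ↔ p.1 * p.2⁻¹ ∈ N := Iff.rfl

/-- The normal subgroup of `H` attached to a subgroup of `H × H`. -/
def nk (K : Subgroup (H × H)) : Subgroup H := K.comap (MonoidHom.inl H H)

lemma mem_nk {K : Subgroup (H × H)} {h : H} : h ∈ nk K ↔ ((h, 1) : H × H) ∈ K := Iff.rfl

lemma diag_mem {K : Subgroup (H × H)}
    (hD : ((MonoidHom.id H).prod (MonoidHom.id H)).range ≤ K) (h : H) :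
    ((h, h) : H × H) ∈ K := hD ⟨h, rfl⟩

lemma nk_normal {K : Subgroup (H × H)}
    (hD : ((MonoidHom.id H).prod (MonoidHom.id H)).range ≤ K) : (nk K).Normal := by
  constructor
  intro n hn g
  have : ((g * n * g⁻¹, 1) : H × H) = (g, g) * (n, 1) * (g⁻¹, g⁻¹) := by
    simp [Prod.ext_iff]
  rw [mem_nk, this]
  exact mul_mem (mul_mem (diag_mem hD g) hn) (diag_mem hD g⁻¹)

lemma kn_nk {K : Subgroup (H × H)}
    (hD : ((MonoidHom.id H).prod (MonoidHom.id H)).range ≤ K) :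
    kn (nk K) (nk_normal hD) = K := by
  ext p
  rw [mem_kn, mem_nk]
  constructor
  · intro hp
    have : p = (p.1 * p.2⁻¹, 1) * (p.2, p.2) := by simp [Prod.ext_iff]
    rw [this]
    exact mul_mem hp (diag_mem hD _)
  · intro hp
    have : ((p.1 * p.2⁻¹, 1) : H × H) = p * (p.2⁻¹, p.2⁻¹) := by simp [Prod.ext_iff]
    rw [this]
    exact mul_mem hp (diag_mem hD _)

lemma nk_kn {N : Subgroup H} (hN : N.Normal) : nk (kn N hN) = N := by
  ext h
  rw [mem_nk, mem_kn]
  simp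

lemma le_kn {N : Subgroup H} (hN : N.Normal) :
    ((MonoidHom.id H).prod (MonoidHom.id H)).range ≤ kn N hN := by
  rintro p ⟨h, rfl⟩
  rw [mem_kn]
  simpa using one_mem N

lemma kn_le_kn {N N' : Subgroup H} {hN : N.Normal} {hN' : N'.Normal} :
    kn N hN ≤ kn N' hN' ↔ N ≤ N' := by
  constructor
  · intro h x hx
    have := h (show ((x, 1) : H × H) ∈ kn N hN by rw [mem_kn]; simpa)
    rw [mem_kn] at this; simpa using this
  · intro h p hp
    exact h hp

lemma kn_top (hT : (⊤ : Subgroup H).Normal) : kn ⊤ hT = ⊤ := by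
  ext p; simp [mem_kn]

lemma kn_eq_top {N : Subgroup H} {hN : N.Normal} : kn N hN = ⊤ ↔ N = ⊤ := by
  constructor
  · intro h
    ext x
    simp only [Subgroup.mem_top, iff_true]
    have : ((x, 1) : H × H) ∈ kn N hN := h ▸ Subgroup.mem_top _
    rw [mem_kn] at this; simpa using this
  · rintro rfl; exact kn_top _

end DiagAux

/-- The maximal subgroups of `H × H` containing the diagonal subgroup are in bijection
with the maximal normal subgroups of `H`. -/
theorem maximal_over_diagonal_equiv_maximal_normal (H : Type*) [Group H] [Finite H] :
    Nonempty
      ({K : Subgroup (H × H) //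
          ((MonoidHom.id H).prod (MonoidHom.id H)).range ≤ K ∧ IsCoatom K} ≃
        {N : Subgroup H // N.Normal ∧ N ≠ ⊤ ∧
          ∀ M : Subgroup H, M.Normal → N < M → M = ⊤}) := by
  open DiagAux in
  refine ⟨{
    toFun := fun ⟨K, hD, hK⟩ => ⟨nk K, nk_normal hD, ?_, ?_⟩
    invFun := fun ⟨N, hN, hNt, hMax⟩ => ⟨kn N hN, le_kn hN, ?_, ?_⟩
    left_inv := ?_
    right_inv := ?_ }⟩
  · -- nk K ≠ ⊤
    intro h
    exact hK.1 (by rw [← kn_nk hD, kn_eq_top, h])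
  · -- maximality among normals
    intro M hM hlt
    have h1 : K < kn M hM := by
      rw [← kn_nk hD]
      exact lt_of_le_of_ne (kn_le_kn.mpr hlt.le)
        (fun h => absurd (congrArg nk h) (by rw [nk_kn, nk_kn]; exact hlt.ne))
    have := hK.2 _ h1
    rwa [kn_eq_top] at this
  · -- kn N ≠ ⊤
    rw [Ne, kn_eq_top]; exact hNt
  · -- coatom upper part: any L > kn N is ⊤
    intro L hL
    have hDL : ((MonoidHom.id H).prod (MonoidHom.id H)).range ≤ L :=
      le_trans (le_kn hN) hL.le
    have hlt : N < nk L := by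
      refine lt_of_le_of_ne ?_ ?_
      · conv_lhs => rw [← nk_kn hN]
        intro x hx
        exact hL.le hx
      · intro h
        apply hL.ne
        rw [← kn_nk hDL]
        exact le_antisymm (kn_le_kn.mpr h.le) (kn_le_kn.mpr h.ge)
    have := hMax (nk L) (nk_normal hDL) hlt
    rw [← kn_nk hDL]
    rw [kn_eq_top]
    exact this
  · rintro ⟨K, hD, hK⟩
    exact Subtype.ext (kn_nk hD)
  · rintro ⟨N, hN, hNt, hMax⟩
    exact Subtype.ext (nk_kn hN)
end

section
/- For a finite group H, the number of maximal normal subgroups of H is at most the number of conjugacy classes of H minus 1; in particular it is less than the number of irreducible complex representations of H. -/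
section Aux

variable {H : Type*} [Group H]

theorem normal_conj_mem_iff (N : Subgroup H) (hN : N.Normal) (g x : H) :
    g * x * g⁻¹ ∈ N ↔ x ∈ N := by
  constructor
  · intro h
    have := hN.conj_mem _ h g⁻¹
    simpa [mul_assoc] using this
  · intro h
    exact hN.conj_mem x h g

open Classical in
/-- Indicator function of a normal subgroup, as a function on conjugacy classes. -/
noncomputable def indC (N : Subgroup H) (hN : N.Normal) : ConjClasses H → ℚ :=
  Quotient.lift (fun x => if x ∈ N then (1 : ℚ) else 0) (by
    intro a b h
    obtain ⟨c, hc⟩ := h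
    have hb : (c : H) * a * (c : H)⁻¹ = b := by
      have h' : (c : H) * a = b * (c : H) := hc
      rw [h', mul_inv_cancel_right]
    rw [← hb, ← normal_conj_mem_iff N hN (c : H) a])

open Classical in
theorem indC_mk (N : Subgroup H) (hN : N.Normal) (x : H) :
    indC N hN (ConjClasses.mk x) = if x ∈ N then (1 : ℚ) else 0 := rfl

open Classical in
theorem sum_indC [Fintype H] (N M : Subgroup H) (hN : N.Normal)
    [Fintype M] :
    ∑ x : M, indC N hN (ConjClasses.mk (x : H)) = (Nat.card (N ⊓ M : Subgroup H) : ℚ) := by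
  classical
  simp only [indC_mk]
  rw [Finset.sum_boole]
  have h1 : Nat.card (N ⊓ M : Subgroup H) = Fintype.card {x : M // (x : H) ∈ N} := by
    rw [← Nat.card_eq_fintype_card]
    refine Nat.card_congr ?_
    exact
      { toFun := fun x => ⟨⟨(x : H), x.2.2⟩, x.2.1⟩
        invFun := fun x => ⟨(x.1 : H), ⟨x.2, x.1.2⟩⟩
        left_inv := fun x => rfl
        right_inv := fun x => rfl }
  rw [h1, Fintype.card_subtype]

theorem card_inf_mul_card [Finite H] (N M : Subgroup H) (hN : N.Normal)
    (hsup : N ⊔ M = ⊤) :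
    Nat.card (N ⊓ M : Subgroup H) * Nat.card H = Nat.card N * Nat.card M := by
  have h1 : N.relIndex M = N.index := by
    have h := Subgroup.relIndex_sup_right (H := M) (K := N)
    rw [sup_comm, hsup] at h
    rw [← h, Subgroup.relIndex_top_right]
  have h2 : Nat.card (N.subgroupOf M) * (N.subgroupOf M).index = Nat.card M :=
    Subgroup.card_mul_index _
  have h3 : Nat.card (N.subgroupOf M) = Nat.card (N ⊓ M : Subgroup H) := by
    rw [← Subgroup.inf_subgroupOf_right N M]
    exact Nat.card_congr (Subgroup.subgroupOfEquivOfLe inf_le_right).toEquiv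
  have h4 : Nat.card N * N.index = Nat.card H := Subgroup.card_mul_index N
  calc Nat.card (N ⊓ M : Subgroup H) * Nat.card H
      = Nat.card (N ⊓ M : Subgroup H) * (Nat.card N * N.index) := by rw [h4]
    _ = Nat.card N * (Nat.card (N.subgroupOf M) * (N.subgroupOf M).index) := by
        rw [h3]; rw [Subgroup.relIndex] at h1; rw [h1]; ring
    _ = Nat.card N * Nat.card M := by rw [h2]

end Aux

/-- The number of maximal normal subgroups of a finite group is at most the number of
conjugacy classes minus 1; in particular it is less than the number of conjugacy classes
(which equals the number of irreducible complex representations). -/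
theorem card_maximal_normal_lt_card_conjClasses (H : Type*) [Group H] [Finite H] :
    Nat.card {N : Subgroup H // N.Normal ∧ N ≠ ⊤ ∧
        ∀ M : Subgroup H, M.Normal → N < M → M = ⊤} ≤ Nat.card (ConjClasses H) - 1 ∧
    Nat.card {N : Subgroup H // N.Normal ∧ N ≠ ⊤ ∧
        ∀ M : Subgroup H, M.Normal → N < M → M = ⊤} < Nat.card (ConjClasses H) := by
  classical
  have _ : Fintype H := Fintype.ofFinite H
  set T := {N : Subgroup H // N.Normal ∧ N ≠ ⊤ ∧
      ∀ M : Subgroup H, M.Normal → N < M → M = ⊤}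
  have _ : Fintype T := Fintype.ofFinite T
  have _ : Fintype (ConjClasses H) := Fintype.ofFinite _
  -- subgroups indexed by `Option T`
  let S : Option T → Subgroup H := fun o => o.elim ⊤ (fun N => N.1)
  have hSnorm : ∀ o, (S o).Normal := by
    rintro (_ | N)
    · exact inferInstanceAs ((⊤ : Subgroup H).Normal)
    · exact N.2.1
  -- the indicator class functions
  let v : Option T → ConjClasses H → ℚ := fun o => indC (S o) (hSnorm o)
  have key : Fintype.card (Option T) ≤ Fintype.card (ConjClasses H) := by
    have hli : LinearIndependent ℚ v := by
      rw [Fintype.linearIndependent_iff]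
      intro g hg
      -- the basic family of equations
      have E : ∀ M : Subgroup H,
          ∑ o : Option T, g o * (Nat.card (S o ⊓ M : Subgroup H) : ℚ) = 0 := by
        intro M
        have h0 : ∀ x : M, ∑ o : Option T, g o • v o (ConjClasses.mk (x : H)) = 0 := by
          intro x
          have := congrFun hg (ConjClasses.mk (x : H))
          simpa using this
        have h1 : ∑ x : M, ∑ o : Option T, g o • v o (ConjClasses.mk (x : H)) = 0 :=
          Finset.sum_eq_zero fun x _ => h0 x
        rw [Finset.sum_comm] at h1
        calc ∑ o : Option T, g o * (Nat.card (S o ⊓ M : Subgroup H) : ℚ)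
            = ∑ o : Option T, ∑ x : M, g o • v o (ConjClasses.mk (x : H)) := by
              refine Finset.sum_congr rfl fun o _ => ?_
              rw [← sum_indC (S o) M (hSnorm o), Finset.mul_sum]
              exact Finset.sum_congr rfl fun x _ => rfl
          _ = 0 := h1
      -- coefficients at maximal normal subgroups vanish
      have hmax : ∀ j : T, g (some j) = 0 := by
        intro j
        have hEj := E j.1
        have hEtop := E ⊤
        have hcomb : ∑ o : Option T,
            g o * ((Nat.card H : ℚ) * (Nat.card (S o ⊓ j.1 : Subgroup H) : ℚ)
              - (Nat.card j.1 : ℚ) * (Nat.card (S o ⊓ (⊤ : Subgroup H) : Subgroup H) : ℚ)) = 0 := by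
          have h1 : ∑ o : Option T,
              (Nat.card H : ℚ) * (g o * (Nat.card (S o ⊓ j.1 : Subgroup H) : ℚ)) = 0 := by
            rw [← Finset.mul_sum, hEj, mul_zero]
          have h2 : ∑ o : Option T,
              (Nat.card j.1 : ℚ)
                * (g o * (Nat.card (S o ⊓ (⊤ : Subgroup H) : Subgroup H) : ℚ)) = 0 := by
            rw [← Finset.mul_sum, hEtop, mul_zero]
          calc ∑ o : Option T, g o * ((Nat.card H : ℚ) * (Nat.card (S o ⊓ j.1 : Subgroup H) : ℚ)
                - (Nat.card j.1 : ℚ) * (Nat.card (S o ⊓ (⊤ : Subgroup H) : Subgroup H) : ℚ))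
              = (∑ o : Option T, (Nat.card H : ℚ) * (g o * (Nat.card (S o ⊓ j.1 : Subgroup H) : ℚ)))
                - ∑ o : Option T, (Nat.card j.1 : ℚ)
                  * (g o * (Nat.card (S o ⊓ (⊤ : Subgroup H) : Subgroup H) : ℚ)) := by
                rw [← Finset.sum_sub_distrib]
                exact Finset.sum_congr rfl fun o _ => by ring
            _ = 0 := by rw [h1, h2, sub_zero]
        -- all terms except `some j` vanish
        have hterm : ∀ o : Option T, o ≠ some j →
            g o * ((Nat.card H : ℚ) * (Nat.card (S o ⊓ j.1 : Subgroup H) : ℚ)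
              - (Nat.card j.1 : ℚ) * (Nat.card (S o ⊓ (⊤ : Subgroup H) : Subgroup H) : ℚ)) = 0 := by
          rintro (_ | i) hne
          · have : g none * ((Nat.card H : ℚ)
                * (Nat.card ((⊤ : Subgroup H) ⊓ j.1 : Subgroup H) : ℚ)
                - (Nat.card j.1 : ℚ)
                  * (Nat.card ((⊤ : Subgroup H) ⊓ (⊤ : Subgroup H) : Subgroup H) : ℚ)) = 0 := by
              rw [top_inf_eq, top_inf_eq, Subgroup.card_top]
              ring
            exact this
          · have hij : i.1 ≠ j.1 := by
              intro h
              exact hne (congrArg some (Subtype.ext h))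
            have hsup : i.1 ⊔ j.1 = ⊤ := by
              have hnormal : (i.1 ⊔ j.1).Normal :=
                @Subgroup.sup_normal H _ i.1 j.1 i.2.1 j.2.1
              have hlt : i.1 < i.1 ⊔ j.1 := by
                rcases lt_or_eq_of_le (le_sup_left : i.1 ≤ i.1 ⊔ j.1) with h | h
                · exact h
                · exfalso
                  have hji : j.1 ≤ i.1 := le_sup_right.trans h.ge
                  rcases lt_or_eq_of_le hji with h' | h'
                  · exact i.2.2.1 (j.2.2.2 i.1 i.2.1 h')
                  · exact hij h'.symm
              exact i.2.2.2 _ hnormal hlt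
            have hcard := card_inf_mul_card i.1 j.1 i.2.1 hsup
            have hq : (Nat.card (i.1 ⊓ j.1 : Subgroup H) : ℚ) * (Nat.card H : ℚ)
                = (Nat.card i.1 : ℚ) * (Nat.card j.1 : ℚ) := by
              exact_mod_cast hcard
            have : g (some i) * ((Nat.card H : ℚ)
                * (Nat.card (i.1 ⊓ j.1 : Subgroup H) : ℚ)
                - (Nat.card j.1 : ℚ) * (Nat.card (i.1 ⊓ (⊤ : Subgroup H) : Subgroup H) : ℚ)) = 0 := by
              rw [mul_comm (Nat.card H : ℚ), hq, inf_top_eq]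
              ring
            exact this
        have hsum := Finset.sum_eq_single (s := (Finset.univ : Finset (Option T)))
          (some j) (fun o _ ho => hterm o ho) (fun h => absurd (Finset.mem_univ _) h)
        rw [hsum] at hcomb
        have hsingle : g (some j)
            * ((Nat.card H : ℚ) * (Nat.card (j.1 : Subgroup H) : ℚ)
              - (Nat.card j.1 : ℚ) * (Nat.card (j.1 : Subgroup H) : ℚ)) = 0 := by
          have h' : g (some j)
              * ((Nat.card H : ℚ) * (Nat.card (j.1 ⊓ j.1 : Subgroup H) : ℚ)
                - (Nat.card j.1 : ℚ)
                  * (Nat.card (j.1 ⊓ (⊤ : Subgroup H) : Subgroup H) : ℚ)) = 0 := hcomb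
          rwa [inf_idem, inf_top_eq] at h' 
        have hlt : Nat.card j.1 < Nat.card H := by
          rcases lt_or_eq_of_le (Subgroup.card_le_card_group j.1) with h | h
          · exact h
          · exact absurd (Subgroup.eq_top_of_card_eq j.1 h) j.2.2.1
        have hpos : 0 < Nat.card j.1 := Nat.card_pos
        have hne : ((Nat.card H : ℚ) * (Nat.card j.1 : ℚ)
            - (Nat.card j.1 : ℚ) * (Nat.card j.1 : ℚ)) ≠ 0 := by
          have h1 : (Nat.card j.1 : ℚ) < (Nat.card H : ℚ) := by exact_mod_cast hlt
          have h2 : (0 : ℚ) < (Nat.card j.1 : ℚ) := by exact_mod_cast hpos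
          nlinarith
        exact (mul_eq_zero.mp hsingle).resolve_right hne
      -- the top coefficient vanishes
      have htop : g none = 0 := by
        have hEtop := E ⊤
        have hterm' : ∀ o : Option T, o ≠ none →
            g o * (Nat.card (S o ⊓ (⊤ : Subgroup H) : Subgroup H) : ℚ) = 0 := by
          rintro (_ | i) ho
          · exact absurd rfl ho
          · rw [hmax i]; ring
        have hsum := Finset.sum_eq_single (s := (Finset.univ : Finset (Option T)))
          (none : Option T) (fun o _ ho => hterm' o ho) (fun h => absurd (Finset.mem_univ _) h)
        rw [hsum] at hEtop
        have h0 : g none * (Nat.card ((⊤ : Subgroup H) ⊓ (⊤ : Subgroup H) : Subgroup H) : ℚ)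
            = 0 := hEtop
        rw [inf_idem] at h0
        have hpos : (0 : ℚ) < (Nat.card (⊤ : Subgroup H) : ℚ) := by
          exact_mod_cast (Nat.card_pos : 0 < Nat.card (⊤ : Subgroup H))
        exact (mul_eq_zero.mp h0).resolve_right (ne_of_gt hpos)
      rintro (_ | i)
      · exact htop
      · exact hmax i
    have hfin := hli.fintype_card_le_finrank
    rwa [Module.finrank_pi] at hfin
  rw [Fintype.card_option] at key
  have hcardT : Nat.card T = Fintype.card T := Nat.card_eq_fintype_card
  have hcardC : Nat.card (ConjClasses H) = Fintype.card (ConjClasses H) := Nat.card_eq_fintype_card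
  constructor <;> omega
end

section
/- Let G be a finite solvable group that is a semidirect product G = A ⋊ K with A elementary abelian and K acting irreducibly and nontrivially on A. Then any two maximal subgroups of G with trivial core are conjugate in G. -/
open Subgroup

private lemma mtc_card_le {G : Type*} [Group G] [Finite G] {H K₁ K₂ : Subgroup G}
    (d2 : H ⊓ K₂ = ⊥)
    (s1 : ∀ y ∈ K₂, ∃ a ∈ H, ∃ x ∈ K₁, y = a * x) :
    Nat.card K₂ ≤ Nat.card K₁ := by
  choose a ha x hx hyx using fun (y : K₂) => s1 y y.2
  have hinj : Function.Injective (fun y : K₂ => (⟨x y, hx y⟩ : K₁)) := by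
    intro y y' h
    simp only [Subtype.mk.injEq] at h
    have hmem : (y : G) * (y' : G)⁻¹ ∈ H ⊓ K₂ := by
      constructor
      · have : (y : G) * (y' : G)⁻¹ = a y * (a y')⁻¹ := by
          rw [hyx y, hyx y', h]; group
        rw [this]
        exact H.mul_mem (ha y) (H.inv_mem (ha y'))
      · exact K₂.mul_mem y.2 (K₂.inv_mem y'.2)
    rw [d2, Subgroup.mem_bot] at hmem
    exact Subtype.ext (mul_inv_eq_one.mp hmem)
  exact Nat.card_le_card_of_injective _ hinj

private lemma mtc_key {G : Type*} [Group G] [Finite G] {H K₁ K₂ : Subgroup G} (hH : H.Normal)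
    (hab : ∀ a ∈ H, ∀ b ∈ H, a * b = b * a)
    (d2 : H ⊓ K₂ = ⊥)
    (s1 : ∀ y ∈ K₂, ∃ a ∈ H, ∃ x ∈ K₁, y = a * x)
    (s2 : ∀ x ∈ K₁, ∃ a ∈ H, ∃ y ∈ K₂, x = a * y)
    (hcop : Nat.Coprime (Nat.card H) (Nat.card K₁)) :
    ∃ b ∈ H, Subgroup.map (MulAut.conj b).toMonoidHom K₁ = K₂ := by
  classical
  letI : CommGroup H := { (inferInstance : Group H) with mul_comm := fun a b => Subtype.ext (hab a a.2 b b.2) }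
  choose δ hδH φ hφK hdec using fun (x : K₁) => s2 x x.2
  have huniq : ∀ a a' y y' : G, a ∈ H → a' ∈ H → y ∈ K₂ → y' ∈ K₂ →
      a * y = a' * y' → a = a' ∧ y = y' := by
    intro a a' y y' haH ha'H hyK hy'K hEq
    have h3 : a'⁻¹ * a * y = y' := by rw [mul_assoc, hEq]; group
    have hmem : a'⁻¹ * a ∈ H ⊓ K₂ := by
      constructor
      · exact H.mul_mem (H.inv_mem ha'H) haH
      · have : a'⁻¹ * a = y' * y⁻¹ := by rw [← h3]; group
        rw [this]
        exact K₂.mul_mem hy'K (K₂.inv_mem hyK)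
    rw [d2, Subgroup.mem_bot, inv_mul_eq_one] at hmem
    subst hmem
    exact ⟨rfl, by rwa [mul_right_inj] at hEq⟩
  have mem_conj : ∀ (g : G) (h : H), g * (h : G) * g⁻¹ ∈ H := fun g h => hH.conj_mem h h.2 g
  let ψ : K₁ → (H →* H) := fun x =>
    { toFun := fun h => ⟨(x : G) * (h : G) * (x : G)⁻¹, mem_conj x h⟩
      map_one' := by ext; simp
      map_mul' := fun h₁ h₂ => by ext; simp [mul_assoc] }
  have hcoc : ∀ x x' : K₁, δ (x * x') = δ x * ((x : G) * δ x' * (x : G)⁻¹) := by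
    intro x x'
    have hmem2 : (x : G) * δ x' * (x : G)⁻¹ ∈ H := by
      simpa using hH.conj_mem _ (hδH x') (x : G)
    have key : (δ x * ((x : G) * δ x' * (x : G)⁻¹)) * (φ x * φ x')
        = δ (x * x') * φ (x * x') := by
      rw [← hdec (x * x')]
      push_cast
      calc δ x * ((x : G) * δ x' * (x : G)⁻¹) * (φ x * φ x')
          = δ x * (φ x * δ x' * (φ x)⁻¹) * (φ x * φ x') := by
            congr 2
            have hφx : φ x = (δ x)⁻¹ * (x : G) := by rw [hdec x]; group
            rw [hφx]
            have hcom := hab _ hmem2 _ (hδH x)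
            rw [show (δ x)⁻¹ * (x:G) * δ x' * ((δ x)⁻¹ * (x:G))⁻¹
                = (δ x)⁻¹ * (((x:G) * δ x' * (x:G)⁻¹) * δ x) by group, hcom]
            group
        _ = δ x * φ x * (δ x' * φ x') := by group
        _ = (x : G) * (x' : G) := by rw [← hdec x, ← hdec x']
    have := huniq _ _ _ _
      (H.mul_mem (hδH x) hmem2) (hδH (x * x'))
      (K₂.mul_mem (hφK x) (hφK x')) (hφK (x * x')) key
    exact this.1.symm
  letI : Fintype K₁ := Fintype.ofFinite _
  set n : ℕ := Nat.card K₁ with hn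
  have hncard : (Finset.univ : Finset K₁).card = n := by
    rw [Finset.card_univ, hn, Nat.card_eq_fintype_card]
  let δ' : K₁ → H := fun x => ⟨δ x, hδH x⟩
  set c : H := ∏ x : K₁, δ' x with hc
  have hcop' : Nat.Coprime (Nat.card H) n := hcop
  have hid : ∀ x : K₁, c = δ' x ^ n * ψ x c := by
    intro x
    have h1 : c = ∏ x' : K₁, δ' (x * x') :=
      (Fintype.prod_equiv (Equiv.mulLeft x) _ _ fun x' => rfl).symm
    have h2 : ∀ x' : K₁, δ' (x * x') = δ' x * ψ x (δ' x') := by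
      intro x'
      exact Subtype.ext (hcoc x x')
    calc c = ∏ x' : K₁, δ' (x * x') := h1
      _ = ∏ x' : K₁, δ' x * ψ x (δ' x') := by simp_rw [h2]
      _ = (∏ _x' : K₁, δ' x) * ∏ x' : K₁, ψ x (δ' x') := Finset.prod_mul_distrib
      _ = δ' x ^ n * ψ x c := by
          rw [Finset.prod_const, hncard, hc, map_prod]
  obtain ⟨b, hbn⟩ : ∃ b : H, b ^ n = c :=
    ⟨(powCoprime hcop').symm c, by
      rw [← powCoprime_apply hcop']; exact (powCoprime hcop').apply_symm_apply c⟩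
  have hδb : ∀ x : K₁, δ' x = b * (ψ x b)⁻¹ := by
    intro x
    have h1 : (δ' x) ^ n = (b * (ψ x b)⁻¹) ^ n := by
      rw [mul_pow, inv_pow, ← map_pow, hbn]
      exact eq_mul_inv_of_mul_eq (hid x).symm
    apply (powCoprime hcop').injective
    rw [powCoprime_apply hcop', powCoprime_apply hcop']
    exact h1
  refine ⟨(b : G)⁻¹, H.inv_mem b.2, ?_⟩
  have hconj : ∀ x : K₁, (b : G)⁻¹ * (x : G) * (b : G) = φ x := by
    intro x
    have hδx : δ x = (b : G) * ((x : G) * (b : G) * (x : G)⁻¹)⁻¹ := by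
      have := congrArg (Subtype.val) (hδb x)
      simpa [ψ] using this
    have hφx : φ x = (δ x)⁻¹ * (x : G) := by rw [hdec x]; group
    have huH : (x : G)⁻¹ * (b : G)⁻¹ * (x : G) ∈ H := by
      simpa using hH.conj_mem _ (H.inv_mem b.2) (x : G)⁻¹
    have hu : ((x:G)⁻¹ * (b:G)⁻¹ * (x:G)) * (b:G) = (b:G) * ((x:G)⁻¹ * (b:G)⁻¹ * (x:G)) :=
      hab _ huH _ b.2
    rw [hφx, hδx]
    calc (b:G)⁻¹ * (x:G) * (b:G)
        = (x:G) * (((x:G)⁻¹ * (b:G)⁻¹ * (x:G)) * (b:G)) := by group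
      _ = (x:G) * ((b:G) * ((x:G)⁻¹ * (b:G)⁻¹ * (x:G))) := by rw [hu]
      _ = ((b:G) * ((x:G) * (b:G) * (x:G)⁻¹)⁻¹)⁻¹ * (x:G) := by group
  have hle : Subgroup.map (MulAut.conj (b : G)⁻¹).toMonoidHom K₁ ≤ K₂ := by
    rintro g hg
    rw [Subgroup.mem_map] at hg
    obtain ⟨x, hxK, rfl⟩ := hg
    have h4 : (MulAut.conj (b:G)⁻¹).toMonoidHom x = (b:G)⁻¹ * x * (b:G) := by
      simp [MulAut.conj_apply]
    rw [h4]
    have h5 := hconj ⟨x, hxK⟩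
    simp only at h5
    rw [h5]
    exact hφK ⟨x, hxK⟩
  have hcard1 : Nat.card (Subgroup.map (MulAut.conj (b:G)⁻¹).toMonoidHom K₁) = Nat.card K₁ :=
    (Nat.card_congr (K₁.equivMapOfInjective _
      (fun u v huv => (MulAut.conj ((b:G)⁻¹)).injective huv)).toEquiv).symm
  exact Subgroup.eq_of_le_of_card_ge hle (by rw [hcard1]; exact mtc_card_le d2 s1)


/-- In a finite solvable group `G = A ⋊ K` with `A` elementary abelian and `K` acting
irreducibly and nontrivially on `A`, any two maximal subgroups with trivial core are
conjugate. -/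
theorem maximal_trivial_core_conjugate (G : Type*) [Group G] [Finite G] [Group.IsSolvable G]
    (A K : Subgroup G) (hA : A.Normal)
    (p : ℕ) (hp : p.Prime) (hel : ∀ a ∈ A, a ^ p = 1)
    (hab : ∀ a ∈ A, ∀ b ∈ A, a * b = b * a)
    (hcompl : Subgroup.IsComplement' A K)
    (hirr : ∀ B : Subgroup G, B ≤ A → (∀ k ∈ K, ∀ b ∈ B, k * b * k⁻¹ ∈ B) →
      B = ⊥ ∨ B = A)
    (hnontriv : ∃ k ∈ K, ∃ a ∈ A, k * a * k⁻¹ ≠ a)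
    (K₁ K₂ : Subgroup G) (h₁ : IsCoatom K₁) (h₂ : IsCoatom K₂)
    (hc₁ : K₁.normalCore = ⊥) (hc₂ : K₂.normalCore = ⊥) :
    ∃ g : G, Subgroup.map (MulAut.conj g).toMonoidHom K₁ = K₂ := by
  classical
  haveI := hA
  haveI : Fact p.Prime := ⟨hp⟩
  obtain ⟨k₀, hk₀K, a₀, ha₀A, hne₀⟩ := hnontriv
  have hAbot : A ≠ ⊥ := by
    intro h
    rw [h, Subgroup.mem_bot] at ha₀A
    exact hne₀ (by rw [ha₀A]; group)
  have hAtop : A ≠ ⊤ := by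
    intro h
    exact hne₀ (by rw [hab k₀ (h ▸ Subgroup.mem_top k₀) a₀ ha₀A, mul_inv_cancel_right])
  -- decomposition of G
  have decomp : ∀ (K' : Subgroup G), A ⊔ K' = ⊤ → ∀ g : G, ∃ a ∈ A, ∃ x ∈ K', g = a * x := by
    intro K' hsup g
    have hg : g ∈ (↑(A ⊔ K') : Set G) := by rw [hsup]; trivial
    rw [Subgroup.normal_mul] at hg
    obtain ⟨a, ha, x, hx, hax⟩ := hg
    exact ⟨a, ha, x, hx, hax.symm⟩
  -- basic facts about coatoms with trivial core
  have main_facts : ∀ K' : Subgroup G, IsCoatom K' → K'.normalCore = ⊥ →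
      A ⊓ K' = ⊥ ∧ A ⊔ K' = ⊤ := by
    intro K' hco hcore
    have hnotle : ¬ A ≤ K' := by
      intro hle
      have h5 : A ≤ K'.normalCore := Subgroup.normal_le_normalCore.mpr hle
      rw [hcore] at h5
      exact hAbot (le_bot_iff.mp h5)
    have hsup : A ⊔ K' = ⊤ := by
      refine hco.2 _ (lt_of_le_of_ne le_sup_right fun h => hnotle ?_)
      rw [h]
      exact le_sup_left
    have hdisj : A ⊓ K' = ⊥ := by
      have hnormal : (A ⊓ K').Normal := by
        constructor
        intro x hx g
        obtain ⟨a, haA, y, hyK, rfl⟩ := decomp K' hsup g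
        have h1 : y * x * y⁻¹ ∈ A ⊓ K' :=
          ⟨hA.conj_mem _ hx.1 y, K'.mul_mem (K'.mul_mem hyK hx.2) (K'.inv_mem hyK)⟩
        have h2 : (a * y) * x * (a * y)⁻¹ = a * (y * x * y⁻¹) * a⁻¹ := by group
        rw [h2, hab a haA _ h1.1, mul_inv_cancel_right]
        exact h1
      rcases hirr (A ⊓ K') inf_le_left (fun k _ b hb => hnormal.conj_mem b hb k) with h | h
      · exact h
      · exact absurd (h ▸ inf_le_right : A ≤ K') hnotle
    exact ⟨hdisj, hsup⟩
  obtain ⟨hd₁, hs₁⟩ := main_facts K₁ h₁ hc₁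
  obtain ⟨hd₂, hs₂⟩ := main_facts K₂ h₂ hc₂
  have dec₁ := decomp K₁ hs₁
  have dec₂ := decomp K₂ hs₂
  -- the centralizer of A is A
  have hAC : A ≤ Subgroup.centralizer (A : Set G) := fun a ha =>
    Subgroup.mem_centralizer_iff.mpr fun b hb => hab b hb a ha
  have hCnormal : (Subgroup.centralizer (A : Set G)).Normal := by
    constructor
    intro x hx g
    rw [Subgroup.mem_centralizer_iff] at hx ⊢
    intro h hh
    have hh' : g⁻¹ * h * g ∈ A := by simpa using hA.conj_mem h hh g⁻¹
    have h5 := hx _ hh'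
    calc h * (g * x * g⁻¹) = g * ((g⁻¹ * h * g) * x) * g⁻¹ := by group
      _ = g * (x * (g⁻¹ * h * g)) * g⁻¹ := by rw [h5]
      _ = (g * x * g⁻¹) * h := by group
  have hCcore : Subgroup.centralizer (A : Set G) ⊓ K₁ = ⊥ := by
    haveI hDn : (Subgroup.centralizer (A : Set G) ⊓ K₁).Normal := by
      constructor
      intro x hx g
      obtain ⟨a, haA, y, hyK, rfl⟩ := dec₁ g
      have h1 : y * x * y⁻¹ ∈ Subgroup.centralizer (A : Set G) ⊓ K₁ :=
        ⟨hCnormal.conj_mem _ hx.1 y, K₁.mul_mem (K₁.mul_mem hyK hx.2) (K₁.inv_mem hyK)⟩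
      have h2 : (a * y) * x * (a * y)⁻¹ = a * (y * x * y⁻¹) * a⁻¹ := by group
      rw [h2, Subgroup.mem_centralizer_iff.mp h1.1 a haA, mul_inv_cancel_right]
      exact h1
    have hle : Subgroup.centralizer (A : Set G) ⊓ K₁ ≤ K₁.normalCore :=
      Subgroup.normal_le_normalCore.mpr inf_le_right
    rw [hc₁] at hle
    exact le_bot_iff.mp hle
  have hCent : ∀ g : G, (∀ a ∈ A, g * a = a * g) → g ∈ A := by
    intro g hg
    obtain ⟨a, haA, x, hxK, rfl⟩ := dec₁ g
    have hxC : x ∈ Subgroup.centralizer (A : Set G) ⊓ K₁ := by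
      refine ⟨?_, hxK⟩
      have hgC : a * x ∈ Subgroup.centralizer (A : Set G) :=
        Subgroup.mem_centralizer_iff.mpr fun b hb => (hg b hb).symm
      have h6 := (Subgroup.centralizer (A : Set G)).mul_mem
        ((Subgroup.centralizer (A : Set G)).inv_mem (hAC haA)) hgC
      rwa [inv_mul_cancel_left] at h6
    rw [hCcore, Subgroup.mem_bot] at hxC
    rw [hxC, mul_one]
    exact haA
  -- quotient group setup
  obtain ⟨g₁, hg₁⟩ : ∃ g : G, g ∉ A := by
    by_contra h
    push_neg at h
    exact hAtop ((Subgroup.eq_top_iff' A).mpr h)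
  haveI : Nontrivial (G ⧸ A) := ⟨⟨QuotientGroup.mk g₁, 1, by
    intro h
    exact hg₁ ((QuotientGroup.eq_one_iff g₁).mp h)⟩⟩
  obtain ⟨n₀, hn₀, hn₀min⟩ : ∃ n, derivedSeries (G ⧸ A) n = ⊥ ∧
      ∀ m, m < n → derivedSeries (G ⧸ A) m ≠ ⊥ := by
    have h := (inferInstance : Group.IsSolvable (G ⧸ A)).solvable
    exact ⟨Nat.find h, Nat.find_spec h, fun m hm => Nat.find_min h hm⟩
  have hn₀pos : 0 < n₀ := by
    rcases Nat.eq_zero_or_pos n₀ with h | h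
    · rw [h, derivedSeries_zero] at hn₀
      have h7 : QuotientGroup.mk (s := A) g₁ ∈ (⊥ : Subgroup (G ⧸ A)) := hn₀ ▸ Subgroup.mem_top _
      rw [Subgroup.mem_bot] at h7
      exact absurd ((QuotientGroup.eq_one_iff g₁).mp h7) hg₁
    · exact h
  set M := derivedSeries (G ⧸ A) (n₀ - 1) with hM
  haveI hMnormal : M.Normal := derivedSeries_normal _ _
  have hMbot : M ≠ ⊥ := hn₀min _ (Nat.sub_lt hn₀pos one_pos)
  have hMM : ⁅M, M⁆ = ⊥ := by
    have h8 : derivedSeries (G ⧸ A) (n₀ - 1 + 1) = ⁅M, M⁆ := derivedSeries_succ _ _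
    rw [Nat.sub_add_cancel hn₀pos, hn₀] at h8
    exact h8.symm
  have hMcomm : ∀ u ∈ M, ∀ v ∈ M, u * v = v * u := by
    intro u hu v hv
    open scoped commutatorElement in
    have h6 : ⁅u, v⁆ ∈ (⊥ : Subgroup (G ⧸ A)) := hMM ▸ Subgroup.commutator_mem_commutator hu hv
    rw [Subgroup.mem_bot] at h6
    exact (commutatorElement_eq_one_iff_commute.mp h6).eq
  -- a prime q dividing the order of M, and the q-torsion subgroup P of M
  have hMcard : Nat.card M ≠ 1 := fun h => hMbot (Subgroup.card_eq_one.mp h)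
  obtain ⟨q, hq, hqdvd⟩ := Nat.exists_prime_and_dvd hMcard
  haveI : Fact q.Prime := ⟨hq⟩
  obtain ⟨x₀, hx₀⟩ : ∃ x : M, orderOf x = q := exists_prime_orderOf_dvd_card' q hqdvd
  set P : Subgroup (G ⧸ A) :=
    { carrier := {x : G ⧸ A | x ∈ M ∧ x ^ q = 1}
      one_mem' := ⟨M.one_mem, one_pow q⟩
      mul_mem' := fun {x y} hx hy => ⟨M.mul_mem hx.1 hy.1, by
        rw [Commute.mul_pow (hMcomm x hx.1 y hy.1), hx.2, hy.2, one_mul]⟩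
      inv_mem' := fun {x} hx => ⟨M.inv_mem hx.1, by rw [inv_pow, hx.2, inv_one]⟩ } with hP
  have hPnormal : P.Normal := by
    constructor
    intro x hx g
    refine ⟨hMnormal.conj_mem x hx.1 g, ?_⟩
    rw [show g * x * g⁻¹ = MulAut.conj g x from rfl, ← map_pow, hx.2, map_one]
  have hx₀P : (x₀ : G ⧸ A) ∈ P := by
    refine ⟨x₀.2, ?_⟩
    have h9 : x₀ ^ q = 1 := by rw [← hx₀]; exact pow_orderOf_eq_one x₀
    have := congrArg (Subtype.val) h9
    push_cast at this
    exact this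
  have hx₀ne : (x₀ : G ⧸ A) ≠ 1 := by
    intro h
    have h10 : x₀ = 1 := Subtype.ext h
    rw [h10, orderOf_one] at hx₀
    exact hq.one_lt.ne' hx₀.symm
  -- the preimage N of P in G
  set N : Subgroup G := Subgroup.comap (QuotientGroup.mk' A) P with hN
  haveI hNnormal : N.Normal := hPnormal.comap _
  have hAN : A ≤ N := by
    intro a ha
    show QuotientGroup.mk' A a ∈ P
    have : QuotientGroup.mk' A a = 1 := (QuotientGroup.eq_one_iff a).mpr ha
    rw [this]
    exact P.one_mem
  obtain ⟨g₀, hg₀⟩ : ∃ g : G, QuotientGroup.mk' A g = (x₀ : G ⧸ A) :=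
    QuotientGroup.mk'_surjective A _
  have hg₀N : g₀ ∈ N := by
    show QuotientGroup.mk' A g₀ ∈ P
    rw [hg₀]
    exact hx₀P
  have hg₀A : g₀ ∉ A := by
    intro h
    exact hx₀ne (by rw [← hg₀]; exact (QuotientGroup.eq_one_iff g₀).mpr h)
  have hNpow : ∀ x ∈ N, x ^ q ∈ A := by
    intro x hx
    have h11 : (QuotientGroup.mk' A x) ^ q = 1 := hx.2
    rw [← map_pow] at h11
    exact (QuotientGroup.eq_one_iff _).mp h11
  have hNA : ¬ N ≤ A := fun h => hg₀A (h hg₀N)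
  -- A is a p-group
  have hpA : IsPGroup p A := by
    intro a
    refine ⟨1, Subtype.ext ?_⟩
    push_cast
    rw [pow_one]
    exact hel a a.2
  -- q ≠ p, via the fixed-point theorem for p-groups
  have hqp : q ≠ p := by
    intro hqp
    subst hqp
    have hNp : IsPGroup q N := by
      intro x
      refine ⟨2, Subtype.ext ?_⟩
      push_cast
      have h7 : (x : G) ^ q ∈ A := hNpow _ x.2
      have h8 : ((x : G) ^ q) ^ q = 1 := hel _ h7
      rw [pow_two, pow_mul]
      exact h8
    letI : SMul N A := ⟨fun x a => ⟨(x : G) * a * (x : G)⁻¹, hA.conj_mem a a.2 x⟩⟩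
    have hsmul : ∀ (x : N) (a : A), ((x • a : A) : G) = (x : G) * a * (x : G)⁻¹ :=
      fun x a => rfl
    letI : MulAction N A :=
      { one_smul := fun a => Subtype.ext (by rw [hsmul]; simp)
        mul_smul := fun x y a => Subtype.ext (by
          rw [hsmul, hsmul, hsmul]
          push_cast
          group) }
    have hcongr := IsPGroup.card_modEq_card_fixedPoints hNp A
    have hpA' : q ∣ Nat.card A := by
      rcases IsPGroup.card_eq_or_dvd hpA with h | h
      · exact absurd (Subgroup.card_eq_one.mp h) hAbot
      · exact h
    have hfp : q ∣ Nat.card (MulAction.fixedPoints N A) := by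
      have h12 : Nat.card A ≡ 0 [MOD q] := (Nat.modEq_zero_iff_dvd).mpr hpA'
      exact (Nat.modEq_zero_iff_dvd).mp (hcongr.symm.trans h12)
    have hfp1 : (1 : A) ∈ MulAction.fixedPoints N A := by
      intro x
      refine Subtype.ext ?_
      show (x : G) * ((1 : A) : G) * (x : G)⁻¹ = ((1 : A) : G)
      simp
    have hpos : 0 < Nat.card (MulAction.fixedPoints N A) :=
      Nat.card_pos_iff.mpr ⟨⟨⟨1, hfp1⟩⟩, Subtype.finite⟩
    have h2lt : 1 < Nat.card (MulAction.fixedPoints N A) :=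
      lt_of_lt_of_le hq.one_lt (Nat.le_of_dvd hpos hfp)
    obtain ⟨a₁, ha₁fp, ha₁ne⟩ : ∃ a : A, a ∈ MulAction.fixedPoints N A ∧ a ≠ 1 := by
      by_contra h
      push_neg at h
      haveI : Subsingleton (MulAction.fixedPoints N A) :=
        ⟨fun u v => Subtype.ext ((h u u.2).trans (h v v.2).symm)⟩
      have hcardeq : Nat.card (MulAction.fixedPoints N A) = 1 :=
        Nat.card_eq_one_iff_unique.mpr ⟨inferInstance, ⟨⟨1, hfp1⟩⟩⟩
      omega
    have hBconj : ∀ (g : G), ∀ b ∈ A ⊓ Subgroup.centralizer (N : Set G),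
        g * b * g⁻¹ ∈ A ⊓ Subgroup.centralizer (N : Set G) := by
      intro g b hb
      refine ⟨hA.conj_mem b hb.1 g, Subgroup.mem_centralizer_iff.mpr ?_⟩
      intro n hn
      have hn' : g⁻¹ * n * g ∈ N := by simpa using hNnormal.conj_mem n hn g⁻¹
      have h10 := Subgroup.mem_centralizer_iff.mp hb.2 _ hn'
      calc n * (g * b * g⁻¹) = g * ((g⁻¹ * n * g) * b) * g⁻¹ := by group
        _ = g * (b * (g⁻¹ * n * g)) * g⁻¹ := by rw [h10]
        _ = (g * b * g⁻¹) * n := by group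
    rcases hirr (A ⊓ Subgroup.centralizer (N : Set G)) inf_le_left
        (fun k _ b hb => hBconj k b hb) with hBbot | hBA
    · have ha₁B : (a₁ : G) ∈ A ⊓ Subgroup.centralizer (N : Set G) := by
        refine ⟨a₁.2, Subgroup.mem_centralizer_iff.mpr ?_⟩
        intro n hn
        have h13 := ha₁fp ⟨n, hn⟩
        have hval : n * (a₁ : G) * n⁻¹ = (a₁ : G) := congrArg Subtype.val h13
        calc n * (a₁ : G) = (n * (a₁ : G) * n⁻¹) * n := by group
          _ = (a₁ : G) * n := by rw [hval]
      rw [hBbot, Subgroup.mem_bot] at ha₁B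
      exact ha₁ne (Subtype.ext ha₁B)
    · apply hNA
      intro n hn
      apply hCent
      intro a ha
      have haB : a ∈ A ⊓ Subgroup.centralizer (N : Set G) := by rw [hBA]; exact ha
      exact Subgroup.mem_centralizer_iff.mp haB.2 n hn
  -- the subgroups Kᵢ ⊓ N are q-groups
  have hqK : ∀ K' : Subgroup G, A ⊓ K' = ⊥ → IsPGroup q ↥(K' ⊓ N) := by
    intro K' hd x
    refine ⟨1, ?_⟩
    have hx := Subgroup.mem_inf.mp x.2
    have h11 : (x : G) ^ q ∈ A ⊓ K' := ⟨hNpow _ hx.2, K'.pow_mem hx.1 q⟩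
    rw [hd, Subgroup.mem_bot] at h11
    refine Subtype.ext ?_
    push_cast
    rw [pow_one]
    exact h11
  have hcop₁ : Nat.Coprime (Nat.card A) (Nat.card ↥(K₁ ⊓ N)) :=
    IsPGroup.coprime_card_of_ne p q (Ne.symm hqp) A (K₁ ⊓ N) hpA (hqK K₁ hd₁)
  have hcop₂ : Nat.Coprime (Nat.card A) (Nat.card ↥(K₂ ⊓ N)) :=
    IsPGroup.coprime_card_of_ne p q (Ne.symm hqp) A (K₂ ⊓ N) hpA (hqK K₂ hd₂)
  -- decompositions inside N
  have sN : ∀ (K' : Subgroup G), (∀ g, ∃ a ∈ A, ∃ x ∈ K', g = a * x) →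
      ∀ n ∈ N, ∃ a ∈ A, ∃ x ∈ K' ⊓ N, n = a * x := by
    intro K' hdec n hn
    obtain ⟨a, ha, x, hx, rfl⟩ := hdec n
    have hxN : x ∈ N := by
      have h12 : a⁻¹ * (a * x) ∈ N := N.mul_mem (N.inv_mem (hAN ha)) hn
      rwa [inv_mul_cancel_left] at h12
    exact ⟨a, ha, x, Subgroup.mem_inf.mpr ⟨hx, hxN⟩, rfl⟩
  have sN₁ := sN K₁ dec₁
  have sN₂ := sN K₂ dec₂
  have hdN₂ : A ⊓ (K₂ ⊓ N) = ⊥ := by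
    have h13 : A ⊓ (K₂ ⊓ N) ≤ A ⊓ K₂ := inf_le_inf_left A inf_le_left
    rw [hd₂] at h13
    exact le_bot_iff.mp h13
  -- conjugate K₁ ⊓ N to K₂ ⊓ N by an element of A
  obtain ⟨b, hbA, hbmap⟩ := mtc_key hA hab hdN₂
    (fun y hy => sN₁ y (Subgroup.mem_inf.mp hy).2)
    (fun x hx => sN₂ x (Subgroup.mem_inf.mp hx).2) hcop₁
  -- Frattini-type argument : G = A * normalizer (K₂ ⊓ N)
  have hconjhom : ∀ u v : G, (MulAut.conj u).toMonoidHom.comp (MulAut.conj v).toMonoidHom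
      = (MulAut.conj (u * v)).toMonoidHom := by
    intro u v
    ext x
    simp only [MonoidHom.comp_apply, MulEquiv.coe_toMonoidHom, MulAut.conj_apply]
    group
  have hfrat : ∀ g : G, ∃ d ∈ Subgroup.normalizer (((K₂ ⊓ N : Subgroup G) : Set G)), ∃ a ∈ A, g = a * d := by
    intro g
    have hmapcard : Nat.card ↥(Subgroup.map (MulAut.conj g).toMonoidHom (K₂ ⊓ N))
        = Nat.card ↥(K₂ ⊓ N) :=
      (Nat.card_congr ((K₂ ⊓ N).equivMapOfInjective _
        (fun u v huv => (MulAut.conj g).injective huv)).toEquiv).symm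
    have hmemmap : ∀ x : G, x ∈ Subgroup.map (MulAut.conj g).toMonoidHom (K₂ ⊓ N)
        ↔ g⁻¹ * x * g ∈ K₂ ⊓ N := by
      intro x
      rw [Subgroup.mem_map]
      constructor
      · rintro ⟨y, hy, rfl⟩
        have h14 : (MulAut.conj g).toMonoidHom y = g * y * g⁻¹ := rfl
        rw [h14, show g⁻¹ * (g * y * g⁻¹) * g = y by group]
        exact hy
      · intro h
        exact ⟨g⁻¹ * x * g, h, by show g * (g⁻¹ * x * g) * g⁻¹ = x; group⟩
    have hdmap : A ⊓ Subgroup.map (MulAut.conj g).toMonoidHom (K₂ ⊓ N) = ⊥ := by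
      rw [eq_bot_iff]
      intro x hx
      have h15 : g⁻¹ * x * g ∈ A ⊓ (K₂ ⊓ N) :=
        ⟨by simpa using hA.conj_mem x hx.1 g⁻¹, (hmemmap x).mp hx.2⟩
      rw [hdN₂, Subgroup.mem_bot] at h15
      have h16 : x = 1 := by
        have := congrArg (fun t => g * t * g⁻¹) h15
        simpa [mul_assoc] using this
      rw [Subgroup.mem_bot]
      exact h16
    have hs1' : ∀ y ∈ K₂ ⊓ N, ∃ a ∈ A,
        ∃ x ∈ Subgroup.map (MulAut.conj g).toMonoidHom (K₂ ⊓ N), y = a * x := by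
      intro y hy
      have hy' : g⁻¹ * y * g ∈ N := by
        simpa using hNnormal.conj_mem y (Subgroup.mem_inf.mp hy).2 g⁻¹
      obtain ⟨a, ha, x, hx, hEq⟩ := sN₂ _ hy'
      refine ⟨g * a * g⁻¹, hA.conj_mem a ha g, g * x * g⁻¹,
        (hmemmap _).mpr (by rw [show g⁻¹ * (g * x * g⁻¹) * g = x by group]; exact hx), ?_⟩
      rw [show (g * a * g⁻¹) * (g * x * g⁻¹) = g * (a * x) * g⁻¹ by group, ← hEq]
      group
    have hs2' : ∀ x ∈ Subgroup.map (MulAut.conj g).toMonoidHom (K₂ ⊓ N),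
        ∃ a ∈ A, ∃ y ∈ K₂ ⊓ N, x = a * y := by
      intro x hx
      have h17 := (hmemmap x).mp hx
      have h18 : x ∈ N := by
        have := hNnormal.conj_mem _ (Subgroup.mem_inf.mp h17).2 g
        rwa [show g * (g⁻¹ * x * g) * g⁻¹ = x by group] at this
      exact sN₂ x h18
    obtain ⟨c, hcA, hcmap⟩ := mtc_key hA hab hdN₂ hs1' hs2' (by rw [hmapcard]; exact hcop₂)
    rw [Subgroup.map_map, hconjhom c g] at hcmap
    refine ⟨c * g, ?_, c⁻¹, A.inv_mem hcA, by group⟩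
    rw [Subgroup.mem_normalizer_iff]
    intro h
    constructor
    · intro hh
      rw [← hcmap]
      exact ⟨h, hh, rfl⟩
    · intro hh
      rw [← hcmap, Subgroup.mem_map] at hh
      obtain ⟨y, hy, hEq⟩ := hh
      have h19 : y = h := by
        apply (MulAut.conj (c * g)).injective
        exact hEq
      rwa [← h19]
  -- K₂ normalizes K₂ ⊓ N
  have hKnorm : ∀ (K' : Subgroup G), K' ≤ Subgroup.normalizer (((K' ⊓ N : Subgroup G) : Set G)) := by
    intro K' y hy
    rw [Subgroup.mem_normalizer_iff]
    intro h
    constructor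
    · intro hh
      have hh' := Subgroup.mem_inf.mp hh
      exact Subgroup.mem_inf.mpr ⟨K'.mul_mem (K'.mul_mem hy hh'.1) (K'.inv_mem hy),
        hNnormal.conj_mem _ hh'.2 y⟩
    · intro hh
      have hh' := Subgroup.mem_inf.mp hh
      have h20 : y⁻¹ * (y * h * y⁻¹) * y = h := by group
      rw [← h20]
      refine Subgroup.mem_inf.mpr ⟨K'.mul_mem (K'.mul_mem (K'.inv_mem hy) hh'.1) hy, ?_⟩
      have := hNnormal.conj_mem _ hh'.2 y⁻¹
      simpa using this
  -- A ⊓ centralizer (K₂ ⊓ N) is trivial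
  have hB'bot : A ⊓ Subgroup.centralizer ((K₂ ⊓ N : Subgroup G) : Set G) = ⊥ := by
    have hB'conj : ∀ (g : G), ∀ x ∈ A ⊓ Subgroup.centralizer ((K₂ ⊓ N : Subgroup G) : Set G),
        g * x * g⁻¹ ∈ A ⊓ Subgroup.centralizer ((K₂ ⊓ N : Subgroup G) : Set G) := by
      intro g x hx
      obtain ⟨d, hd, a, ha, rfl⟩ := hfrat g
      have h16 : d * x * d⁻¹ ∈ A ⊓ Subgroup.centralizer ((K₂ ⊓ N : Subgroup G) : Set G) := by
        refine ⟨hA.conj_mem _ hx.1 d, Subgroup.mem_centralizer_iff.mpr ?_⟩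
        intro u hu
        have hd' : d⁻¹ ∈ Subgroup.normalizer (((K₂ ⊓ N : Subgroup G) : Set G)) := (Subgroup.normalizer (((K₂ ⊓ N : Subgroup G) : Set G))).inv_mem hd
        have hu' : d⁻¹ * u * d ∈ K₂ ⊓ N := by
          have := (Subgroup.mem_normalizer_iff.mp hd' u).mp hu
          simpa using this
        have h17 := Subgroup.mem_centralizer_iff.mp hx.2 _ hu'
        calc u * (d * x * d⁻¹) = d * ((d⁻¹ * u * d) * x) * d⁻¹ := by group
          _ = d * (x * (d⁻¹ * u * d)) * d⁻¹ := by rw [h17]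
          _ = (d * x * d⁻¹) * u := by group
      rw [show (a * d) * x * (a * d)⁻¹ = a * (d * x * d⁻¹) * a⁻¹ by group,
        hab a ha _ h16.1, mul_inv_cancel_right]
      exact h16
    rcases hirr _ inf_le_left (fun k _ x hx => hB'conj k x hx) with h | h
    · exact h
    · exfalso
      have hQ'A : K₂ ⊓ N ≤ A := by
        intro x hx
        apply hCent
        intro a ha
        have haC : a ∈ A ⊓ Subgroup.centralizer ((K₂ ⊓ N : Subgroup G) : Set G) := by
          rw [h]; exact ha
        exact Subgroup.mem_centralizer_iff.mp haC.2 x hx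
      have hQ'bot : K₂ ⊓ N = ⊥ := by
        rw [eq_bot_iff]
        intro x hx
        have h21 : x ∈ A ⊓ K₂ := ⟨hQ'A hx, (Subgroup.mem_inf.mp hx).1⟩
        rw [hd₂] at h21
        exact h21
      apply hNA
      intro n hn
      obtain ⟨a, ha, x, hx, rfl⟩ := sN₂ n hn
      rw [hQ'bot, Subgroup.mem_bot] at hx
      rw [hx, mul_one]
      exact ha
  -- A ⊓ normalizer (K₂ ⊓ N) is trivial
  have hANorm : ∀ a ∈ A, a ∈ Subgroup.normalizer (((K₂ ⊓ N : Subgroup G) : Set G)) → a = 1 := by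
    intro a ha han
    have haC : a ∈ Subgroup.centralizer ((K₂ ⊓ N : Subgroup G) : Set G) := by
      rw [Subgroup.mem_centralizer_iff]
      intro x hx
      have h20 : a * x * a⁻¹ ∈ K₂ ⊓ N := (Subgroup.mem_normalizer_iff.mp han x).mp hx
      have h21 : (a * x * a⁻¹) * x⁻¹ ∈ A ⊓ K₂ := by
        constructor
        · rw [show (a * x * a⁻¹) * x⁻¹ = a * (x * a⁻¹ * x⁻¹) by group]
          exact A.mul_mem ha (by simpa using hA.conj_mem _ (A.inv_mem ha) x)
        · exact K₂.mul_mem (Subgroup.mem_inf.mp h20).1 (K₂.inv_mem (Subgroup.mem_inf.mp hx).1)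
      rw [hd₂, Subgroup.mem_bot] at h21
      calc x * a = (a * x * a⁻¹ * x⁻¹)⁻¹ * (a * x) := by group
        _ = a * x := by rw [h21, inv_one, one_mul]
    have h22 : a ∈ A ⊓ Subgroup.centralizer ((K₂ ⊓ N : Subgroup G) : Set G) := ⟨ha, haC⟩
    rw [hB'bot, Subgroup.mem_bot] at h22
    exact h22
  -- K₂ equals the normalizer of K₂ ⊓ N
  have hK₂eq : Subgroup.normalizer (((K₂ ⊓ N : Subgroup G) : Set G)) = K₂ := by
    refine le_antisymm ?_ (hKnorm K₂)
    intro d hd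
    obtain ⟨a, ha, y, hy, rfl⟩ := dec₂ d
    have hyn : y ∈ Subgroup.normalizer (((K₂ ⊓ N : Subgroup G) : Set G)) := hKnorm K₂ hy
    have han : a ∈ Subgroup.normalizer (((K₂ ⊓ N : Subgroup G) : Set G)) := by
      have h23 := (Subgroup.normalizer (((K₂ ⊓ N : Subgroup G) : Set G))).mul_mem hd
        ((Subgroup.normalizer (((K₂ ⊓ N : Subgroup G) : Set G))).inv_mem hyn)
      rwa [mul_inv_cancel_right] at h23
    rw [hANorm a ha han, one_mul]
    exact hy
  -- the conjugate of K₁ by b normalizes K₂ ⊓ N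
  have hmemb : ∀ h : G, h ∈ K₂ ⊓ N ↔ b⁻¹ * h * b ∈ K₁ ⊓ N := by
    intro h
    rw [← hbmap, Subgroup.mem_map]
    constructor
    · rintro ⟨y, hy, rfl⟩
      have h24 : (MulAut.conj b).toMonoidHom y = b * y * b⁻¹ := rfl
      rw [h24, show b⁻¹ * (b * y * b⁻¹) * b = y by group]
      exact hy
    · intro hh
      exact ⟨b⁻¹ * h * b, hh, by show b * (b⁻¹ * h * b) * b⁻¹ = h; group⟩
  have hfinmap : Subgroup.map (MulAut.conj b).toMonoidHom K₁ ≤ Subgroup.normalizer (((K₂ ⊓ N : Subgroup G) : Set G)) := by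
    rintro x hx
    rw [Subgroup.mem_map] at hx
    obtain ⟨y, hy, rfl⟩ := hx
    have h25 : (MulAut.conj b).toMonoidHom y = b * y * b⁻¹ := rfl
    rw [h25, Subgroup.mem_normalizer_iff]
    intro h
    rw [hmemb h, hmemb ((b * y * b⁻¹) * h * (b * y * b⁻¹)⁻¹)]
    rw [show b⁻¹ * ((b * y * b⁻¹) * h * (b * y * b⁻¹)⁻¹) * b = y * (b⁻¹ * h * b) * y⁻¹ by group]
    exact Subgroup.mem_normalizer_iff.mp (hKnorm K₁ hy) (b⁻¹ * h * b)
  have hble : Subgroup.map (MulAut.conj b).toMonoidHom K₁ ≤ K₂ := hK₂eq ▸ hfinmap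
  -- conclude using maximality
  refine ⟨b, ?_⟩
  have hsurj : Function.Surjective (MulAut.conj b).toMonoidHom := (MulAut.conj b).surjective
  have hle' : K₁ ≤ Subgroup.comap (MulAut.conj b).toMonoidHom K₂ :=
    Subgroup.map_le_iff_le_comap.mp hble
  rcases eq_or_lt_of_le hle' with hEq | hlt
  · rw [hEq, Subgroup.map_comap_eq_self_of_surjective hsurj]
  · exfalso
    have h26 := h₁.2 _ hlt
    have h27 : K₂ = ⊤ := by
      have h28 := congrArg (Subgroup.map (MulAut.conj b).toMonoidHom) h26
      rw [Subgroup.map_comap_eq_self_of_surjective hsurj] at h28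
      rw [h28]
      exact Subgroup.map_top_of_surjective _ hsurj
    exact h₂.1 h27
end
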